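/- For λ > 0, fixed y < 0, and m ≠ n, the bivariate degenerate Hermite polynomials are partially orthogonal in x: ∫_{-∞}^{∞} (1+λ)^{x²/(4yλ)} H_n(x,y|λ) H_m(x,y|λ) dx = 0, where (1+λ)^{x²/(4yλ)} = exp(x²·log(1+λ)/(4yλ)) is integrable since y < 0. -/

import Mathlib

open Real Finset MeasureTheory

noncomputable def dH (l x y : ℝ) (n : ℕ) : ℝ :=
  ∑ k ∈ Finset.range (n / 2 + 1),
    (Nat.factorial n : ℝ) / ((Nat.factorial (n - 2 * k) : ℝ) * (Nat.factorial k : ℝ)) *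
      (Real.log (1 + l) / l) ^ (n - k) * x ^ (n - 2 * k) * y ^ k

section aux
open Polynomial Nat

lemma fact_two_mul (k : ℕ) : (2 * k)! = 2^k * k ! * (2 * k - 1)‼ := by
  induction k with
  | zero => simp
  | succ k ih =>
    have h1 : 2 * (k + 1) = (2 * k + 1)+1 := by ring
    have h3 : (2*k+1)‼ = (2*k+1) * (2*k-1)‼ := by
      simpa using Nat.doubleFactorial_add_one (2*k)
    rw [h1, Nat.factorial_succ, Nat.factorial_succ, ih, Nat.add_sub_cancel, h3,
      show (k+1) = k+1 from rfl, Nat.factorial_succ k]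
    ring

lemma coeff_real (n k : ℕ) (h : 2*k ≤ n) :
    ((2*k-1)‼ * n.choose (n - 2*k) : ℝ) =
      (n ! : ℝ) / ((n - 2 * k)! * k ! * 2^k) := by
  rw [Nat.choose_symm h]
  have hnat : n.choose (2*k) * (2 * k)! * (n - 2 * k)! = n ! :=
    Nat.choose_mul_factorial_mul_factorial h
  rw [fact_two_mul] at hnat
  have hne : ((n - 2 * k)! * k ! * 2^k : ℝ) ≠ 0 := by positivity
  field_simp
  push_cast [← hnat]
  ring

lemma hermite_sum (n : ℕ) (u : ℝ) : (aeval u (hermite n) : ℝ) =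
    ∑ k ∈ Finset.range (n/2+1),
      (-1:ℝ)^k * ((n ! : ℝ) / ((n - 2 * k)! * k ! * 2^k)) * u^(n - 2*k) := by
  rw [Polynomial.aeval_eq_sum_range (p := hermite n) u, natDegree_hermite]
  have himg : (Finset.range (n/2+1)).image (fun k => n - 2*k) ⊆ Finset.range (n+1) := by
    intro i hi
    simp only [Finset.mem_image, Finset.mem_range] at hi ⊢
    omega
  have hinj : Set.InjOn (fun k => n - 2*k) (Finset.range (n/2+1)) := by
    intro a ha b hb hab
    simp only [Finset.coe_range, Set.mem_Iio] at ha hb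
    simp only at hab
    omega
  rw [← Finset.sum_subset himg ?h0, Finset.sum_image hinj]
  case h0 =>
    intro i hi hni
    simp only [Finset.mem_image, Finset.mem_range] at hni hi
    push_neg at hni
    have hodd : Odd (n + i) := by
      rcases Nat.even_or_odd (n + i) with he | ho
      · exfalso
        have hni' : Even (n - i) := by
          rw [Nat.even_sub (by omega)]
          rw [Nat.even_add] at he
          exact he
        obtain ⟨k, hk⟩ := hni'
        exact hni ((n-i)/2) (by omega) (by omega)
      · exact ho
    rw [coeff_hermite_of_odd_add hodd]
    simp
  · apply Finset.sum_congr rfl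
    intro k hk
    have h2k : 2*k ≤ n := by
      have := Finset.mem_range.mp hk; omega
    have heven : Even (n + (n - 2*k)) := ⟨n - k, by omega⟩
    rw [coeff_hermite_of_even_add heven]
    have e1 : (n - (n - 2*k))/2 = k := by omega
    have e2 : n - (n - 2*k) - 1 = 2*k - 1 := by omega
    rw [e1, e2, zsmul_eq_mul]
    have hcr := coeff_real n k h2k
    push_cast
    rw [mul_assoc ((-1:ℝ)^k), hcr]


noncomputable def gs : ℝ → ℝ := fun x => Real.exp (-(x ^ 2 / 2))

lemma integrable_pow_gauss (i : ℕ) : Integrable (fun x : ℝ => x ^ i * gs x) := by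
  have h := integrable_rpow_mul_exp_neg_mul_sq (b := (1:ℝ)/2) (by norm_num)
    (s := (i:ℝ)) (by have := Nat.cast_nonneg (α:=ℝ) i; linarith)
  have : (fun x : ℝ => x ^ (i:ℝ) * Real.exp (-(1/2) * x ^ 2)) =
      fun x : ℝ => x ^ i * gs x := by
    funext x
    rw [Real.rpow_natCast]
    unfold gs
    ring_nf
  rwa [this] at h

lemma integrable_poly_gauss (q : ℝ[X]) : Integrable (fun x : ℝ => eval x q * gs x) := by
  have : (fun x : ℝ => eval x q * gs x) =
      fun x : ℝ => ∑ i ∈ Finset.range (q.natDegree + 1), q.coeff i * (x ^ i * gs x) := by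
    funext x
    rw [Polynomial.eval_eq_sum_range, Finset.sum_mul]
    simp [mul_assoc]
  rw [this]
  exact integrable_finset_sum _ fun i _ => (integrable_pow_gauss i).const_mul _

lemma integrable_aeval_mul (p : ℤ[X]) (c : ℝ) (j : ℕ) :
    Integrable (fun x : ℝ => aeval x p * (c * aeval x (hermite j) * gs x)) := by
  have := integrable_poly_gauss (Polynomial.C c * p.map (Int.castRingHom ℝ) *
    (hermite j).map (Int.castRingHom ℝ))
  refine this.congr (Filter.Eventually.of_forall fun x => ?_)
  simp only [eval_mul, eval_C, Polynomial.aeval_def, Polynomial.eval₂_eq_eval_map,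
    show (algebraMap ℤ ℝ) = Int.castRingHom ℝ from rfl]
  ring

lemma hasDerivAt_gs (x : ℝ) : HasDerivAt gs (-x * gs x) x := by
  have h1 : HasDerivAt (fun x : ℝ => -(x ^ 2 / 2)) (-x) x := by
    exact (((hasDerivAt_pow 2 x).div_const 2).neg).congr_deriv (by norm_num)
  rw [show gs = fun x => Real.exp (-(x ^ 2 / 2)) from rfl]
  simpa [gs, mul_comm] using h1.exp

lemma hasDerivAt_iter_gs (j : ℕ) (x : ℝ) :
    HasDerivAt (deriv^[j] gs) (deriv^[j+1] gs x) x := by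
  have e : deriv^[j] gs = fun x : ℝ => (-1:ℝ)^j * aeval x (hermite j) * gs x :=
    funext fun x => Polynomial.deriv_gaussian_eq_hermite_mul_gaussian j x
  have hd : HasDerivAt (fun x : ℝ => (-1:ℝ)^j * aeval x (hermite j) * gs x)
      (((-1:ℝ)^j * aeval x (derivative (hermite j))) * gs x +
        ((-1:ℝ)^j * aeval x (hermite j)) * (-x * gs x)) x :=
    ((((hermite j).hasDerivAt_aeval x).const_mul _).mul (hasDerivAt_gs x))
  rw [← e] at hd
  rw [Function.iterate_succ_apply', hd.deriv]
  exact hd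

lemma ibp_chain (j : ℕ) (p : ℤ[X]) :
    ∫ x : ℝ, aeval x p * deriv^[j] gs x =
      (-1:ℝ)^j * ∫ x : ℝ, aeval x (derivative^[j] p) * gs x := by
  induction j generalizing p with
  | zero => simp
  | succ j ih =>
    have ej : deriv^[j] gs = fun x : ℝ => (-1:ℝ)^j * aeval x (hermite j) * gs x :=
      funext fun x => Polynomial.deriv_gaussian_eq_hermite_mul_gaussian j x
    have ej1 : deriv^[j+1] gs = fun x : ℝ => (-1:ℝ)^(j+1) * aeval x (hermite (j+1)) * gs x :=
      funext fun x => Polynomial.deriv_gaussian_eq_hermite_mul_gaussian (j+1) x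
    have key : ∫ x : ℝ, aeval x p * deriv^[j+1] gs x =
        -∫ x : ℝ, aeval x (derivative p) * deriv^[j] gs x := by
      apply integral_mul_deriv_eq_deriv_mul_of_integrable
        (u := fun x => (aeval x p : ℝ)) (u' := fun x => (aeval x (derivative p) : ℝ))
        (v := deriv^[j] gs) (v' := deriv^[j+1] gs)
      · exact fun x _ => p.hasDerivAt_aeval x
      · exact fun x _ => hasDerivAt_iter_gs j x
      · show Integrable fun x => aeval x p * deriv^[j+1] gs x
        rw [ej1]; exact integrable_aeval_mul p _ (j+1)
      · show Integrable fun x => aeval x (derivative p) * deriv^[j] gs x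
        rw [ej]; exact integrable_aeval_mul (derivative p) _ j
      · show Integrable fun x => aeval x p * deriv^[j] gs x
        rw [ej]; exact integrable_aeval_mul p _ j
    rw [key, ih (derivative p), Function.iterate_succ_apply]
    ring

lemma orth_lt {m n : ℕ} (h : m < n) :
    ∫ x : ℝ, gs x * aeval x (hermite n) * aeval x (hermite m) = 0 := by
  have e : ∀ x : ℝ, gs x * aeval x (hermite n) * aeval x (hermite m) =
      aeval x (hermite m) * ((-1:ℝ)^n * deriv^[n] gs x) := by
    intro x
    have hr : deriv^[n] gs x = (-1:ℝ)^n * aeval x (hermite n) * Real.exp (-(x^2/2)) :=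
      Polynomial.deriv_gaussian_eq_hermite_mul_gaussian n x
    rw [hr]
    have h1 : ((-1:ℝ)^n) * ((-1:ℝ)^n) = 1 := by
      rw [← mul_pow]; norm_num
    unfold gs
    linear_combination (-(aeval x (hermite m) * aeval x (hermite n) * Real.exp (-(x^2/2)))) * h1
  calc ∫ x : ℝ, gs x * aeval x (hermite n) * aeval x (hermite m)
      = ∫ x : ℝ, (-1:ℝ)^n * (aeval x (hermite m) * deriv^[n] gs x) := by
        congr 1; funext x; rw [e x]; ring
    _ = (-1:ℝ)^n * ∫ x : ℝ, aeval x (hermite m) * deriv^[n] gs x :=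
        integral_const_mul _ _
    _ = (-1:ℝ)^n * ((-1:ℝ)^n * ∫ x : ℝ, aeval x (derivative^[n] (hermite m)) * gs x) := by
        rw [ibp_chain]
    _ = 0 := by
        rw [Polynomial.iterate_derivative_eq_zero (by simpa [natDegree_hermite] using h)]
        simp

lemma orth {m n : ℕ} (h : m ≠ n) :
    ∫ x : ℝ, gs x * aeval x (hermite n) * aeval x (hermite m) = 0 := by
  rcases h.lt_or_gt with hlt | hlt
  · exact orth_lt hlt
  · rw [show (fun x : ℝ => gs x * aeval x (hermite n) * aeval x (hermite m)) =
      fun x : ℝ => gs x * aeval x (hermite m) * aeval x (hermite n) by funext x; ring]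
    exact orth_lt hlt

end aux

section main
open Polynomial Nat
theorem stmt18 (l y : ℝ) (hl : 0 < l) (hy : y < 0) (m n : ℕ) (hmn : m ≠ n) :
    ∫ x : ℝ, Real.exp (x ^ 2 * Real.log (1 + l) / (4 * y * l)) *
        dH l x y n * dH l x y m = 0 := by
  set c : ℝ := Real.log (1 + l) / l with hcdef
  have hc : 0 < c := div_pos (Real.log_pos (by linarith)) hl
  have hl0 : l ≠ 0 := hl.ne'
  have hy0 : y ≠ 0 := hy.ne
  have hc0 : c ≠ 0 := hc.ne'
  have hconst : 0 < -(2*c*y) := by nlinarith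
  set t : ℝ := Real.sqrt (-(2*c*y)) with htdef
  have ht : 0 < t := Real.sqrt_pos.mpr hconst
  have ht2 : t^2 = -(2*c*y) := Real.sq_sqrt hconst.le
  set s : ℝ := c / t with hsdef
  have hs : 0 < s := div_pos hc ht
  have hts : t * s = c := by
    rw [hsdef]; field_simp
  have hA : ∀ (n : ℕ) (x : ℝ), dH l x y n = t^n * aeval (s*x) (hermite n) := by
    intro n x
    rw [hermite_sum, Finset.mul_sum]
    unfold dH
    rw [← hcdef]
    apply Finset.sum_congr rfl
    intro k hk
    have h2k : 2*k ≤ n := by have := Finset.mem_range.mp hk; omega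
    have ht2k : t^(2*k) = (-1:ℝ)^k * 2^k * c^k * y^k := by
      rw [pow_mul, ht2, show -(2*c*y) = (-1) * 2 * (c * y) by ring, mul_pow, mul_pow, mul_pow]
      ring
    have htn : t^n = t^(n - 2*k) * ((-1:ℝ)^k * 2^k * c^k * y^k) := by
      rw [← ht2k, ← pow_add]
      congr 1
      omega
    have hcnk : c^(n-k) = c^(n - 2*k) * c^k := by
      rw [← pow_add]; congr 1; omega
    rw [htn, hcnk, mul_pow s x, show t ^ (n - 2 * k) * ((-1:ℝ) ^ k * 2 ^ k * c ^ k * y ^ k) *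
      ((-1:ℝ) ^ k * ((n ! : ℝ) / ((n - 2 * k)! * k ! * 2 ^ k)) * (s ^ (n - 2 * k) * x ^ (n - 2 * k)))
      = ((-1:ℝ)^k * (-1:ℝ)^k) * (2^k / 2^k) * ((t*s) ^ (n - 2 * k)) *
        ((n ! : ℝ) / ((n - 2 * k)! * k !)) * x ^ (n - 2 * k) * (c^k * y^k) by
        rw [mul_pow t s]; field_simp]
    rw [hts, ← mul_pow]
    norm_num
    ring
  have hW : ∀ x : ℝ, Real.exp (x ^ 2 * Real.log (1 + l) / (4 * y * l)) = gs (s*x) := by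
    intro x
    unfold gs
    congr 1
    have hs2 : s^2 = -(c/(2*y)) := by
      rw [hsdef, div_pow, ht2]
      rw [show c^2 = (c*(2*y)) * (c/(2*y)) by field_simp]
      field_simp
    rw [mul_pow, hs2]
    have hlog : Real.log (1+l) = c * l := by rw [hcdef]; field_simp
    rw [hlog]
    field_simp
    ring
  set F : ℝ → ℝ := fun u => gs u * aeval u (hermite n) * aeval u (hermite m) with hFdef
  have step1 : ∫ x : ℝ, Real.exp (x ^ 2 * Real.log (1 + l) / (4 * y * l)) *
      dH l x y n * dH l x y m = ∫ x : ℝ, (t^n * t^m) * F (s*x) := by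
    congr 1
    funext x
    rw [hW x, hA n x, hA m x, hFdef]
    ring
  rw [step1, integral_const_mul, MeasureTheory.Measure.integral_comp_mul_left F s, hFdef, orth hmn]
  simp

end main
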